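/- Let p be an odd prime. Then A'_{(p-1)/2} ≡ 1 + ∑_{k=1}^{(p-1)/2} (binomial(2k,k)³/64^k)·(1 - p·∑_{i=1}^k 1/(2i-1) + (p²/2)·((∑_{i=1}^k 1/(2i-1))² - 3·∑_{i=1}^k 1/(2i-1)²)) (mod p³). -/

import Mathlib

set_option maxHeartbeats 1000000

open Finset

/-- The Apéry numbers `A'_n = ∑_{k=0}^n C(n,k)^2 C(n+k,k)`. -/
def apery (n : ℕ) : ℕ := ∑ k ∈ Finset.range (n + 1), n.choose k ^ 2 * (n + k).choose k

/-- `a ≡ b (mod p^r)` for rationals: `a - b` is `p^r` times a rational whose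
denominator (in lowest terms) is not divisible by `p`. -/
def pcong (p r : ℕ) (a b : ℚ) : Prop :=
  ∃ q : ℚ, a - b = (p : ℚ) ^ r * q ∧ ¬ (p ∣ q.den)

lemma termIdentity (n : ℕ) : ∀ k, k ≤ n →
    ((n.choose k : ℚ))^2 * (((n+k).choose k : ℚ)) =
      ((2*k).choose k : ℚ)^3 / 64^k *
        ∏ m ∈ Finset.Icc 1 k,
          ((1 - (2*(n:ℚ)+1)/(2*(m:ℚ)-1)) * (1 - ((2*(n:ℚ)+1)/(2*(m:ℚ)-1))^2)) := by
  intro k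
  induction k with
  | zero => simp
  | succ k ih =>
    intro hk
    have hk' : k ≤ n := Nat.le_of_succ_le hk
    have IH := ih hk'
    have hk1 : ((k:ℚ)+1) ≠ 0 := by positivity
    have h2k1 : (2*(k:ℚ)+1) ≠ 0 := by positivity
    have hc0 : ((2*k).choose k : ℚ) ≠ 0 := by
      have := Nat.choose_pos (by omega : k ≤ 2*k)
      positivity
    have h1 : ((n.choose (k+1)) : ℚ) * ((k:ℚ)+1) = (n.choose k : ℚ) * ((n:ℚ) - k) := by
      have := Nat.choose_succ_right_eq n k
      have hsub : ((n - k : ℕ) : ℚ) = (n:ℚ) - k := by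
        rw [Nat.cast_sub hk']
      exact_mod_cast by
        push_cast [← hsub]
        exact_mod_cast congrArg (Nat.cast : ℕ → ℚ) this
    have h2 : ((n+k+1).choose (k+1) : ℚ) * ((k:ℚ)+1) = ((n:ℚ)+k+1) * ((n+k).choose k : ℚ) := by
      have := Nat.add_one_mul_choose_eq (n+k) k
      exact_mod_cast congrArg (Nat.cast : ℕ → ℚ) this.symm
    have h3 : ((k:ℚ)+1) * ((2*(k+1)).choose (k+1) : ℚ) = 2*(2*(k:ℚ)+1) * ((2*k).choose k : ℚ) := by
      have := Nat.succ_mul_centralBinom_succ k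
      simp only [Nat.centralBinom] at this
      exact_mod_cast congrArg (Nat.cast : ℕ → ℚ) this
    rw [Finset.prod_Icc_succ_top (by omega : 1 ≤ k+1)]
    have ha' : ((n.choose (k+1)) : ℚ) = (n.choose k : ℚ) * ((n:ℚ) - k) / ((k:ℚ)+1) := by
      field_simp at h1 ⊢; linarith [h1]
    have hb' : ((n+k+1).choose (k+1) : ℚ) = ((n:ℚ)+k+1) * ((n+k).choose k : ℚ) / ((k:ℚ)+1) := by
      field_simp at h2 ⊢; linarith [h2]
    have hcc : ((2*(k+1)).choose (k+1) : ℚ) = 2*(2*(k:ℚ)+1) * ((2*k).choose k : ℚ) / ((k:ℚ)+1) := by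
      field_simp at h3 ⊢; linarith [h3]
    have hP : ∏ m ∈ Finset.Icc 1 k,
          ((1 - (2*(n:ℚ)+1)/(2*(m:ℚ)-1)) * (1 - ((2*(n:ℚ)+1)/(2*(m:ℚ)-1))^2))
        = 64 ^ k * ((n.choose k : ℚ)^2 * ((n+k).choose k : ℚ)) / ((2*k).choose k : ℚ)^3 := by
      rw [IH]; field_simp
    rw [show n + (k+1) = n + k + 1 by omega]
    rw [ha', hb', hcc, hP]
    push_cast
    have hg : (1 - (2*(n:ℚ)+1)/(2*((k:ℚ)+1)-1)) * (1 - ((2*(n:ℚ)+1)/(2*((k:ℚ)+1)-1))^2)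
        = (2*(k:ℚ)-2*n)^2*(2*(k:ℚ)+2*n+2)/(2*(k:ℚ)+1)^3 := by
      have h : 2*((k:ℚ)+1)-1 = 2*(k:ℚ)+1 := by ring
      rw [h]; field_simp; ring
    rw [hg]
    rw [show (64:ℚ)^(k+1) = 64^k * 64 by ring]
    have h64 : (64:ℚ)^k ≠ 0 := by positivity
    field_simp
    ring

section padic
variable {p : ℕ} [hp : Fact p.Prime]

lemma norm_int_eq_one_x {z : ℤ} (hz : ¬ (p:ℤ) ∣ z) : ‖(z : ℚ_[p])‖ = 1 :=
  le_antisymm (Padic.norm_int_le_one z)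
    (not_lt.mp fun h => hz ((Padic.norm_intCast_lt_one_iff (k := z)).mp h))

lemma nsub (a b : ℚ_[p]) : ‖a - b‖ ≤ max ‖a‖ ‖b‖ := by
  simpa [sub_eq_add_neg] using Padic.nonarchimedean a (-b)

lemma nadd (a b : ℚ_[p]) : ‖a + b‖ ≤ max ‖a‖ ‖b‖ :=
  Padic.nonarchimedean a b

end padic

lemma normB (p n : ℕ) [hp : Fact p.Prime] (hpn : p = 2*n+1) :
    ∀ k, k ≤ n →
    ‖(∏ m ∈ Finset.Icc 1 k, ((1 - (2*(n:ℚ_[p])+1)/(2*(m:ℚ_[p])-1)) * (1 - ((2*(n:ℚ_[p])+1)/(2*(m:ℚ_[p])-1))^2)))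
      - (1 - (∑ i ∈ Finset.Icc 1 k, (2*(n:ℚ_[p])+1)/(2*(i:ℚ_[p])-1))
          + ((∑ i ∈ Finset.Icc 1 k, (2*(n:ℚ_[p])+1)/(2*(i:ℚ_[p])-1))^2
              - 3 * ∑ i ∈ Finset.Icc 1 k, ((2*(n:ℚ_[p])+1)/(2*(i:ℚ_[p])-1))^2)/2)‖
      ≤ ((p:ℝ)⁻¹)^3 := by
  have hp2 : 2 ≤ p := hp.out.two_le
  set ε : ℝ := (p:ℝ)⁻¹ with hε
  have hε0 : 0 ≤ ε := by positivity
  have hε1 : ε ≤ 1 := by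
    rw [hε]
    apply inv_le_one_of_one_le₀
    exact_mod_cast Nat.one_le_iff_ne_zero.mpr (by omega)
  have hcp : (2*(n:ℚ_[p])+1) = (p : ℚ_[p]) := by
    have h : ((2*n+1 : ℕ) : ℚ_[p]) = (p:ℚ_[p]) := by exact_mod_cast congrArg (Nat.cast : ℕ → ℚ_[p]) hpn.symm
    push_cast at h; linear_combination h
  have hc : ‖(2*(n:ℚ_[p])+1)‖ = ε := by rw [hcp]; exact Padic.norm_p
  have hden : ∀ m : ℕ, 1 ≤ m → m ≤ n → ‖2*(m:ℚ_[p])-1‖ = 1 := by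
    intro m h1 h2
    have e : (2*(m:ℚ_[p])-1) = ((2*(m:ℤ)-1 : ℤ) : ℚ_[p]) := by push_cast; ring
    rw [e]
    apply norm_int_eq_one_x
    intro hdvd
    have hle := Int.le_of_dvd (by omega) hdvd
    omega
  have hx : ∀ m : ℕ, 1 ≤ m → m ≤ n → ‖(2*(n:ℚ_[p])+1)/(2*(m:ℚ_[p])-1)‖ = ε := by
    intro m h1 h2
    rw [norm_div, hc, hden m h1 h2, div_one]
  have h2norm : ‖(2:ℚ_[p])‖ = 1 := by
    have e : ((2:ℤ) : ℚ_[p]) = (2:ℚ_[p]) := by push_cast; ring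
    rw [← e]
    apply norm_int_eq_one_x
    intro hdvd
    have hle := Int.le_of_dvd (by omega) hdvd
    omega
  have h3norm : ‖(3:ℚ_[p])‖ ≤ 1 := by
    have e : ((3:ℤ) : ℚ_[p]) = (3:ℚ_[p]) := by push_cast; ring
    rw [← e]; exact Padic.norm_int_le_one 3
  -- sum bounds
  have hS : ∀ k, k ≤ n → ‖∑ i ∈ Finset.Icc 1 k, (2*(n:ℚ_[p])+1)/(2*(i:ℚ_[p])-1)‖ ≤ ε := by
    intro k hk
    apply IsUltrametricDist.norm_sum_le_of_forall_le_of_nonneg hε0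
    intro i hi
    rw [Finset.mem_Icc] at hi
    exact (hx i hi.1 (hi.2.trans hk)).le
  have hQ : ∀ k, k ≤ n → ‖∑ i ∈ Finset.Icc 1 k, ((2*(n:ℚ_[p])+1)/(2*(i:ℚ_[p])-1))^2‖ ≤ ε^2 := by
    intro k hk
    apply IsUltrametricDist.norm_sum_le_of_forall_le_of_nonneg (by positivity)
    intro i hi
    rw [Finset.mem_Icc] at hi
    rw [norm_pow, hx i hi.1 (hi.2.trans hk)]
  intro k
  induction k with
  | zero => intro _; simp; positivity
  | succ k ih =>
    intro hk
    have hk' : k ≤ n := Nat.le_of_succ_le hk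
    have IH := ih hk'
    rw [Finset.prod_Icc_succ_top (by omega : 1 ≤ k+1),
        Finset.sum_Icc_succ_top (by omega : 1 ≤ k+1),
        Finset.sum_Icc_succ_top (by omega : 1 ≤ k+1)]
    set s : ℚ_[p] := ∑ i ∈ Finset.Icc 1 k, (2*(n:ℚ_[p])+1)/(2*(i:ℚ_[p])-1) with hs
    set q : ℚ_[p] := ∑ i ∈ Finset.Icc 1 k, ((2*(n:ℚ_[p])+1)/(2*(i:ℚ_[p])-1))^2 with hq
    set P : ℚ_[p] := ∏ m ∈ Finset.Icc 1 k, ((1 - (2*(n:ℚ_[p])+1)/(2*(m:ℚ_[p])-1)) * (1 - ((2*(n:ℚ_[p])+1)/(2*(m:ℚ_[p])-1))^2)) with hP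
    set x : ℚ_[p] := (2*(n:ℚ_[p])+1)/(2*((k+1:ℕ):ℚ_[p])-1) with hxdef
    have hxn : ‖x‖ = ε := hx (k+1) (by omega) hk
    have hsn : ‖s‖ ≤ ε := hS k hk'
    have hqn : ‖q‖ ≤ ε^2 := hQ k hk'
    set T : ℚ_[p] := 1 - s + (s^2 - 3*q)/2 with hT
    have hs2q : ‖s^2 - 3*q‖ ≤ ε^2 := by
      refine (nsub _ _).trans (max_le ?_ ?_)
      · rw [norm_pow]; exact pow_le_pow_left₀ (norm_nonneg s) hsn 2
      · rw [norm_mul]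
        calc ‖(3:ℚ_[p])‖ * ‖q‖ ≤ 1 * (ε^2) := by
              apply mul_le_mul h3norm hqn (norm_nonneg q) zero_le_one
          _ = ε^2 := one_mul _
    have hTn : ‖T‖ ≤ 1 := by
      rw [hT]
      refine (nadd _ _).trans (max_le ((nsub _ _).trans (max_le ?_ ?_)) ?_)
      · simp
      · exact hsn.trans hε1
      · rw [norm_div, h2norm, div_one]
        exact hs2q.trans (by nlinarith)
    have hgn : ‖(1 - x) * (1 - x^2)‖ ≤ 1 := by
      rw [norm_mul]
      have h1x : ‖1 - x‖ ≤ 1 := by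
        refine (nsub _ _).trans (max_le (by simp) (by rw [hxn]; exact hε1))
      have h1x2 : ‖1 - x^2‖ ≤ 1 := by
        refine (nsub _ _).trans (max_le (by simp) ?_)
        rw [norm_pow, hxn]; nlinarith
      calc ‖1-x‖ * ‖1-x^2‖ ≤ 1*1 := by
            apply mul_le_mul h1x h1x2 (norm_nonneg _) zero_le_one
        _ = 1 := one_mul _
    have key : P * ((1 - x) * (1 - x^2))
        - (1 - (s + x) + ((s + x)^2 - 3*(q + x^2))/2)
        = (P - T) * ((1 - x) * (1 - x^2))
          + (s*x^2 - (x + x^2)*((s^2-3*q)/2) + x^3*T) := by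
      rw [hT]; ring
    rw [key]
    have hE : ‖s*x^2 - (x + x^2)*((s^2-3*q)/2) + x^3*T‖ ≤ ε^3 := by
      refine (nadd _ _).trans (max_le ((nsub _ _).trans (max_le ?_ ?_)) ?_)
      · rw [norm_mul, norm_pow, hxn]
        calc ‖s‖ * ε^2 ≤ ε * ε^2 := by nlinarith [norm_nonneg s]
          _ = ε^3 := by ring
      · rw [norm_mul, norm_div, h2norm, div_one]
        have hxx : ‖x + x^2‖ ≤ ε := by
          refine (nadd _ _).trans (max_le (le_of_eq hxn) ?_)
          rw [norm_pow, hxn]; nlinarith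
        calc ‖x + x^2‖ * ‖s^2 - 3*q‖ ≤ ε * ε^2 := by
              apply mul_le_mul hxx hs2q (norm_nonneg _) hε0
          _ = ε^3 := by ring
      · rw [norm_mul, norm_pow, hxn]
        calc ε^3 * ‖T‖ ≤ ε^3 * 1 := mul_le_mul_of_nonneg_left hTn (by positivity)
          _ = ε^3 := mul_one _
    refine (nadd _ _).trans (max_le ?_ hE)
    rw [norm_mul]
    calc ‖P - T‖ * ‖(1-x)*(1-x^2)‖ ≤ ε^3 * 1 := by
          apply mul_le_mul IH hgn (norm_nonneg _) (by positivity)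
      _ = ε^3 := mul_one _

lemma den_not_dvd {p : ℕ} [hp : Fact p.Prime] {q : ℚ} (h : ‖(q:ℚ_[p])‖ ≤ 1) : ¬ (p ∣ q.den) := by
  intro hd
  have hq : q ≠ 0 := by
    rintro rfl
    simp only [Rat.den_ofNat] at hd
    exact hp.out.ne_one (Nat.eq_one_of_dvd_one hd)
  have hnum : ¬ ((p:ℤ) ∣ q.num) := by
    intro hnd
    have h1 : p ∣ q.num.natAbs := Int.natCast_dvd_natCast.mp (Int.dvd_natAbs.mpr hnd)
    have h2 : p ∣ Nat.gcd q.num.natAbs q.den := Nat.dvd_gcd h1 hd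
    rw [q.reduced] at h2
    exact hp.out.ne_one (Nat.eq_one_of_dvd_one h2)
  have h1 : ‖(q.num : ℚ_[p])‖ = 1 := norm_int_eq_one_x hnum
  have hden : ‖((q.den:ℤ) : ℚ_[p])‖ < 1 :=
    (Padic.norm_intCast_lt_one_iff).mpr (Int.natCast_dvd_natCast.mpr hd)
  have hden0 : (((q.den:ℤ)) : ℚ_[p]) ≠ 0 := by
    simp only [ne_eq, Int.cast_natCast, Nat.cast_eq_zero]
    exact q.den_nz
  have hq' : (q:ℚ_[p]) = (q.num:ℚ_[p]) / (((q.den:ℤ)):ℚ_[p]) := by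
    conv_lhs => rw [← Rat.num_div_den q]
    push_cast
    ring
  rw [hq', norm_div, h1] at h
  have hpos : (0:ℝ) < ‖(((q.den:ℤ)):ℚ_[p])‖ := norm_pos_iff.mpr hden0
  rw [one_div] at h
  have := (inv_le_one₀ hpos).mp h
  linarith

lemma bridgeT (c : ℚ) (k : ℕ) :
    1 - c * ∑ i ∈ Finset.Icc 1 k, (1:ℚ)/(2*i-1)
      + c^2/2 * ((∑ i ∈ Finset.Icc 1 k, (1:ℚ)/(2*i-1))^2 - 3*∑ i ∈ Finset.Icc 1 k, (1:ℚ)/(2*i-1)^2)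
    = 1 - (∑ i ∈ Finset.Icc 1 k, c/(2*(i:ℚ)-1))
      + ((∑ i ∈ Finset.Icc 1 k, c/(2*(i:ℚ)-1))^2 - 3*∑ i ∈ Finset.Icc 1 k, (c/(2*(i:ℚ)-1))^2)/2 := by
  have h1 : ∑ i ∈ Finset.Icc 1 k, c/(2*(i:ℚ)-1) = c * ∑ i ∈ Finset.Icc 1 k, (1:ℚ)/(2*i-1) := by
    rw [Finset.mul_sum]
    apply Finset.sum_congr rfl
    intro i _; ring
  have h2 : ∑ i ∈ Finset.Icc 1 k, (c/(2*(i:ℚ)-1))^2 = c^2 * ∑ i ∈ Finset.Icc 1 k, (1:ℚ)/(2*i-1)^2 := by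
    rw [Finset.mul_sum]
    apply Finset.sum_congr rfl
    intro i _; rw [div_pow]; ring
  rw [h1, h2]; ring

theorem apery_half_expansion (p : ℕ) (hp : p.Prime) (hodd : Odd p) :
    pcong p 3 (apery ((p - 1) / 2))
      (1 + ∑ k ∈ Finset.Icc 1 ((p - 1) / 2),
        (((2 * k).choose k : ℚ) ^ 3 / 64 ^ k)
          * (1 - (p : ℚ) * ∑ i ∈ Finset.Icc 1 k, (1 : ℚ) / (2 * i - 1)
              + (p : ℚ) ^ 2 / 2
                * ((∑ i ∈ Finset.Icc 1 k, (1 : ℚ) / (2 * i - 1)) ^ 2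
                    - 3 * ∑ i ∈ Finset.Icc 1 k, (1 : ℚ) / (2 * i - 1) ^ 2))) := by
  haveI : Fact p.Prime := ⟨hp⟩
  obtain ⟨n, hn⟩ := hodd
  have hn' : p = 2*n+1 := by omega
  have hhalf : (p - 1) / 2 = n := by omega
  rw [hhalf]
  have hpq : (p:ℚ) = 2*(n:ℚ)+1 := by exact_mod_cast congrArg (Nat.cast : ℕ → ℚ) hn'
  -- the exact expansion of the Apery number
  have hA : (apery n : ℚ) = 1 + ∑ k ∈ Finset.Icc 1 n,
      (((2*k).choose k : ℚ)^3/64^k) *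
        ∏ m ∈ Finset.Icc 1 k,
          ((1 - (2*(n:ℚ)+1)/(2*(m:ℚ)-1)) * (1 - ((2*(n:ℚ)+1)/(2*(m:ℚ)-1))^2)) := by
    rw [apery]
    push_cast
    rw [show Finset.range (n+1) = insert 0 (Finset.Icc 1 n) by
      ext a; simp only [Finset.mem_range, Finset.mem_insert, Finset.mem_Icc]; omega]
    rw [Finset.sum_insert (by simp)]
    simp only [Nat.choose_zero_right, Nat.cast_one, one_pow, Nat.add_zero, one_mul]
    congr 1
    apply Finset.sum_congr rfl
    intro k hk
    rw [Finset.mem_Icc] at hk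
    exact termIdentity n k hk.2
  -- rewrite the RHS statement term
  have hR : ∀ k : ℕ,
      (1 - (p : ℚ) * ∑ i ∈ Finset.Icc 1 k, (1 : ℚ) / (2 * i - 1)
        + (p : ℚ) ^ 2 / 2
          * ((∑ i ∈ Finset.Icc 1 k, (1 : ℚ) / (2 * i - 1)) ^ 2
              - 3 * ∑ i ∈ Finset.Icc 1 k, (1 : ℚ) / (2 * i - 1) ^ 2))
      = 1 - (∑ i ∈ Finset.Icc 1 k, (2*(n:ℚ)+1)/(2*(i:ℚ)-1))
        + ((∑ i ∈ Finset.Icc 1 k, (2*(n:ℚ)+1)/(2*(i:ℚ)-1))^2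
            - 3*∑ i ∈ Finset.Icc 1 k, ((2*(n:ℚ)+1)/(2*(i:ℚ)-1))^2)/2 := by
    intro k
    rw [hpq]
    exact bridgeT (2*(n:ℚ)+1) k
  set D : ℚ := (apery n : ℚ)
      - (1 + ∑ k ∈ Finset.Icc 1 n,
        (((2 * k).choose k : ℚ) ^ 3 / 64 ^ k)
          * (1 - (p : ℚ) * ∑ i ∈ Finset.Icc 1 k, (1 : ℚ) / (2 * i - 1)
              + (p : ℚ) ^ 2 / 2
                * ((∑ i ∈ Finset.Icc 1 k, (1 : ℚ) / (2 * i - 1)) ^ 2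
                    - 3 * ∑ i ∈ Finset.Icc 1 k, (1 : ℚ) / (2 * i - 1) ^ 2))) with hD
  have hDsum : D = ∑ k ∈ Finset.Icc 1 n,
      (((2*k).choose k : ℚ)^3/64^k) *
        ((∏ m ∈ Finset.Icc 1 k,
          ((1 - (2*(n:ℚ)+1)/(2*(m:ℚ)-1)) * (1 - ((2*(n:ℚ)+1)/(2*(m:ℚ)-1))^2)))
        - (1 - (∑ i ∈ Finset.Icc 1 k, (2*(n:ℚ)+1)/(2*(i:ℚ)-1))
          + ((∑ i ∈ Finset.Icc 1 k, (2*(n:ℚ)+1)/(2*(i:ℚ)-1))^2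
              - 3*∑ i ∈ Finset.Icc 1 k, ((2*(n:ℚ)+1)/(2*(i:ℚ)-1))^2)/2)) := by
    rw [hD, hA]
    simp only [hR]
    rw [show ∀ x y : ℚ, (1+x) - (1+y) = x - y from fun x y => by ring,
        ← Finset.sum_sub_distrib]
    apply Finset.sum_congr rfl
    intro k _
    ring
  -- norm bound on D
  have hp0 : (p:ℚ) ≠ 0 := Nat.cast_ne_zero.mpr hp.ne_zero
  have hDnorm : ‖(D : ℚ_[p])‖ ≤ ((p:ℝ)⁻¹)^3 := by
    rw [hDsum]
    push_cast
    apply IsUltrametricDist.norm_sum_le_of_forall_le_of_nonneg (by positivity)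
    intro k hk
    rw [Finset.mem_Icc] at hk
    rw [norm_mul]
    have h64 : ‖((64:ℚ_[p]))‖ = 1 := by
      have e : ((64:ℤ) : ℚ_[p]) = (64:ℚ_[p]) := by push_cast; ring
      rw [← e]
      apply norm_int_eq_one_x
      intro hdvd
      have h2 : p ∣ 64 := Int.natCast_dvd_natCast.mp (by exact_mod_cast hdvd)
      have h3 : p ∣ 2 := hp.dvd_of_dvd_pow (show p ∣ 2^6 by norm_num at h2 ⊢; exact h2)
      have := Nat.le_of_dvd (by norm_num) h3
      omega
    have hc1 : ‖(((2*k).choose k : ℚ_[p]))^3/(64:ℚ_[p])^k‖ ≤ 1 := by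
      rw [norm_div, norm_pow, norm_pow, h64, one_pow, div_one]
      have : ‖(((2*k).choose k : ℕ) : ℚ_[p])‖ ≤ 1 := by
        have e : ((((2*k).choose k : ℕ) : ℤ) : ℚ_[p]) = (((2*k).choose k : ℕ) : ℚ_[p]) := by push_cast; ring
        rw [← e]; exact Padic.norm_int_le_one _
      calc ‖(((2*k).choose k : ℕ) : ℚ_[p])‖^3 ≤ 1^3 := by
            apply pow_le_pow_left₀ (norm_nonneg _) this
        _ = 1 := one_pow 3
    calc ‖(((2*k).choose k : ℚ_[p]))^3/(64:ℚ_[p])^k‖ * _ ≤ 1 * (((p:ℝ)⁻¹)^3) := by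
          apply mul_le_mul hc1 (normB p n hn' k hk.2) (norm_nonneg _) zero_le_one
      _ = ((p:ℝ)⁻¹)^3 := one_mul _
  refine ⟨D / (p:ℚ)^3, by rw [mul_div_assoc', mul_div_cancel_left₀ D (pow_ne_zero 3 hp0)], ?_⟩
  apply den_not_dvd (p := p)
  have hcast : ((D / (p:ℚ)^3 : ℚ) : ℚ_[p]) = (D:ℚ_[p]) / ((p:ℚ_[p]))^3 := by push_cast; ring
  rw [hcast, norm_div, norm_pow, Padic.norm_p]
  have hppos : (0:ℝ) < ((p:ℝ)⁻¹)^3 := by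
    have : (0:ℝ) < (p:ℝ) := by exact_mod_cast hp.pos
    positivity
  rw [div_le_one hppos]
  exact hDnorm
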